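/- arXiv:1505.01128 — 2 statements merged into one kernel-verified Lean document; each statement's English description precedes it below -/
import Mathlib

section
/- For every TRS R over a signature Σ, the coinductively/inductively defined infinitary rewrite relation →∞ coincides with the standard ordinal-based relation →∞_ord of strongly convergent transfinite reduction: for all terms s, t ∈ T, s →∞ t if and only if s →∞_ord t. -/
open Relation

/-- A signature: a type of function symbols together with an arity for each symbol. -/
structure Signature where
  Sym : Type
  ar : Sym → ℕ

/-- The polynomial functor whose final coalgebra is the set of (finite and infinite)
terms over the signature `Sg` and the set `X` of variables. -/
def TermF (Sg : Signature) (X : Type) : PFunctor.{0} :=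
  ⟨X ⊕ Sg.Sym, fun a => Sum.rec (fun _ => Empty) (fun f => Fin (Sg.ar f)) a⟩

/-- The set `T` of finite and infinite terms over `Sg` and `X`, defined coinductively
(as the final coalgebra, i.e. the M-type, of `TermF Sg X`). -/
def Tm (Sg : Signature) (X : Type) : Type := PFunctor.M (TermF Sg X)

variable {Sg : Signature} {X : Type}

/-- The term consisting of a single variable. -/
def Tm.var (x : X) : Tm Sg X := PFunctor.M.mk ⟨Sum.inl x, Empty.elim⟩

/-- The term `f(t₁,…,tₙ)` with root symbol `f` and arguments `args`. -/
def Tm.node (f : Sg.Sym) (args : Fin (Sg.ar f) → Tm Sg X) : Tm Sg X :=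
  PFunctor.M.mk ⟨Sum.inr f, args⟩

/-- One step of the corecursive definition of substitution:
`Sum.inl t` means `t` still has to be substituted, `Sum.inr t` means `t` is copied. -/
def substAux (σ : X → Tm Sg X) :
    (Tm Sg X ⊕ Tm Sg X) → (TermF Sg X) (Tm Sg X ⊕ Tm Sg X) := fun s =>
  match s with
  | Sum.inl t =>
    match PFunctor.M.dest t with
    | ⟨Sum.inl x, _⟩ =>
        ⟨(PFunctor.M.dest (σ x)).1, fun b => Sum.inr ((PFunctor.M.dest (σ x)).2 b)⟩
    | ⟨Sum.inr f, k⟩ => ⟨Sum.inr f, fun b => Sum.inl (k b)⟩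
  | Sum.inr t =>
      ⟨(PFunctor.M.dest t).1, fun b => Sum.inr ((PFunctor.M.dest t).2 b)⟩

/-- Application `tσ` of a substitution `σ : X → T` to a term `t`, defined corecursively. -/
def subst (σ : X → Tm Sg X) (t : Tm Sg X) : Tm Sg X :=
  PFunctor.M.corec (substAux σ) (Sum.inl t)

/-- `Occurs x t`: the variable `x` occurs in the term `t`. -/
inductive Occurs (x : X) : Tm Sg X → Prop
  | here {t : Tm Sg X} : t = Tm.var x → Occurs x t
  | deeper {t : Tm Sg X} {f : Sg.Sym} {args : Fin (Sg.ar f) → Tm Sg X}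
      (i : Fin (Sg.ar f)) : t = Tm.node f args → Occurs x (args i) → Occurs x t

/-- A term rewriting system over `Sg` and `X`: a set of rules `ℓ → r` such that
`ℓ` is not a variable and all variables of `r` occur in `ℓ`. -/
structure TRS (Sg : Signature) (X : Type) where
  rules : Set (Tm Sg X × Tm Sg X)
  lhs_not_var : ∀ l r, (l, r) ∈ rules → ∀ x : X, l ≠ Tm.var x
  vars_lhs : ∀ l r, (l, r) ∈ rules → ∀ x : X, Occurs x r → Occurs x l

/-- Relations on terms. -/
abbrev TRel (Sg : Signature) (X : Type) := Tm Sg X → Tm Sg X → Prop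

/-- The root step relation `→ε := {(ℓσ, rσ) | ℓ → r ∈ R, σ a substitution}`. -/
def RootStep (R : TRS Sg X) : TRel Sg X := fun s t =>
  ∃ l r, (l, r) ∈ R.rules ∧ ∃ σ : X → Tm Sg X, s = subst σ l ∧ t = subst σ r

/-- `StepAt Q p s t`: a `Q`-step at position `p`, i.e. `s = C[u]`, `t = C[v]` with
`(u,v) ∈ Q` and `C` a one-hole context whose hole is at position `p`. -/
inductive StepAt (Q : TRel Sg X) : List ℕ → Tm Sg X → Tm Sg X → Prop
  | here {s t : Tm Sg X} : Q s t → StepAt Q [] s t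
  | deeper {f : Sg.Sym} {ss ts : Fin (Sg.ar f) → Tm Sg X} (i : Fin (Sg.ar f))
      {p : List ℕ} : StepAt Q p (ss i) (ts i) → (∀ j, j ≠ i → ss j = ts j) →
      StepAt Q ((i : ℕ) :: p) (Tm.node f ss) (Tm.node f ts)

/-- The one-step rewrite relation `→` of a TRS: a root step applied inside a
one-hole context. -/
def Step (R : TRS Sg X) : TRel Sg X := fun s t => ∃ p, StepAt (RootStep R) p s t

/-- The lifting `↓R` of a relation `R`:
`↓R := {(f(s₁,…,sₙ), f(t₁,…,tₙ)) | f ∈ Σ, s₁ R t₁, …, sₙ R tₙ} ∪ Id`. -/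
def liftRel (R : TRel Sg X) : TRel Sg X := fun s t =>
  s = t ∨ ∃ (f : Sg.Sym) (ss ts : Fin (Sg.ar f) → Tm Sg X),
    s = Tm.node f ss ∧ t = Tm.node f ts ∧ ∀ i, R (ss i) (ts i)

lemma liftRel_mono : Monotone (liftRel (Sg := Sg) (X := X)) := by
  intro R S h s t hst
  rcases hst with h1 | ⟨f, ss, ts, rfl, rfl, hi⟩
  · exact Or.inl h1
  · exact Or.inr ⟨f, ss, ts, rfl, rfl, fun i => h _ _ (hi i)⟩

/-- Relational composition `r ∘ s`. -/
def relComp (r s : TRel Sg X) : TRel Sg X := fun a c => ∃ b, r a b ∧ s b c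

/-- The monotone operator `S ↦ (→ε ∪ ↓R)* ∘ ↓S` (for a fixed `R`). -/
def iredInnerHom (R : TRS Sg X) (U : TRel Sg X) : TRel Sg X →o TRel Sg X where
  toFun S := relComp
    (ReflTransGen (fun s t => RootStep R s t ∨ liftRel U s t)) (liftRel S)
  monotone' := by
    intro S S' h a c hac
    rcases hac with ⟨b, h1, h2⟩
    exact ⟨b, h1, liftRel_mono h _ _ h2⟩

/-- The monotone operator `R ↦ νS.((→ε ∪ ↓R)* ∘ ↓S)`. -/
def iredHom (R : TRS Sg X) : TRel Sg X →o TRel Sg X where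
  toFun U := OrderHom.gfp (iredInnerHom R U)
  monotone' := by
    intro U V h
    apply OrderHom.gfp.monotone
    intro S a c hac
    rcases hac with ⟨b, h1, h2⟩
    refine ⟨b, ?_, h2⟩
    refine ReflTransGen.mono ?_ _ _ h1
    intro x y hxy
    exact hxy.imp id (fun h' => liftRel_mono h _ _ h')

/-- The infinitary rewrite relation `→∞ := μR.νS.((→ε ∪ ↓R)* ∘ ↓S)`. -/
def ired (R : TRS Sg X) : TRel Sg X := OrderHom.lfp (iredHom R)

/-- The monotone operator `R' ↦ (→ε ∪ ↓R')*`. -/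
def biHom (R : TRS Sg X) : TRel Sg X →o TRel Sg X where
  toFun U := ReflTransGen (fun s t => RootStep R s t ∨ liftRel U s t)
  monotone' := by
    intro U V h a b hab
    refine ReflTransGen.mono ?_ _ _ hab
    intro x y hxy
    exact hxy.imp id (fun h' => liftRel_mono h _ _ h')

/-- The bi-infinite rewrite relation `∞→ := νR.(→ε ∪ ↓R)*`. -/
def bired (R : TRS Sg X) : TRel Sg X := OrderHom.gfp (biHom R)

/-- The monotone operator `R' ↦ (←ε ∪ →ε ∪ ↓R')*`. -/
def ieqHom (R : TRS Sg X) : TRel Sg X →o TRel Sg X where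
  toFun U := ReflTransGen (fun s t => RootStep R t s ∨ RootStep R s t ∨ liftRel U s t)
  monotone' := by
    intro U V h a b hab
    refine ReflTransGen.mono ?_ _ _ hab
    intro x y hxy
    exact hxy.imp id (fun h' => h'.imp id (fun h'' => liftRel_mono h _ _ h''))

/-- The infinitary equational reasoning relation `=∞ := νR.(←ε ∪ →ε ∪ ↓R)*`. -/
def ieq (R : TRS Sg X) : TRel Sg X := OrderHom.gfp (ieqHom R)

/-- `Agree n s t`: the terms `s` and `t` coincide up to depth `n`
(i.e. `d(s,t) ≤ 2^{-n}` for the standard metric `d`). -/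
def Agree : ℕ → Tm Sg X → Tm Sg X → Prop
  | 0, _, _ => True
  | n + 1, s, t =>
      (∃ x : X, s = Tm.var x ∧ t = Tm.var x) ∨
      ∃ (f : Sg.Sym) (ss ts : Fin (Sg.ar f) → Tm Sg X),
        s = Tm.node f ss ∧ t = Tm.node f ts ∧ ∀ i, Agree n (ss i) (ts i)

/-- `ConvTo t p l tl`: as `β` approaches the ordinal `l` from below,
`d(t β, tl)` tends to `0` and the depth `|p β|` tends to infinity. -/
def ConvTo (t : Ordinal.{0} → Tm Sg X) (p : Ordinal.{0} → List ℕ) (l : Ordinal.{0})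
    (tl : Tm Sg X) : Prop :=
  (∀ n : ℕ, ∃ β₀ < l, ∀ β, β₀ ≤ β → β < l → Agree n (t β) tl) ∧
  (∀ n : ℕ, ∃ β₀ < l, ∀ β, β₀ ≤ β → β < l → n ≤ (p β).length)

/-- A transfinite sequence of `Q`-steps `(t_β →_{p_β} t_{β+1})_{β<α}` of ordinal
length `α`, weakly continuous and with depths tending to infinity at every limit
ordinal `λ < α`. -/
structure TransSeq (Q : TRel Sg X) (α : Ordinal.{0}) where
  t : Ordinal.{0} → Tm Sg X
  pos : Ordinal.{0} → List ℕ
  step : ∀ β < α, StepAt Q (pos β) (t β) (t (β + 1))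
  conv : ∀ l < α, Order.IsSuccLimit l → ConvTo t pos l (t l)

/-- A transfinite rewrite sequence is strongly convergent if its length is a successor
ordinal (or zero), or there exists a final term to which it converges (with depths
tending to infinity) at the limit. -/
def TransSeq.StronglyConvergent {Q : TRel Sg X} {α : Ordinal.{0}} (s : TransSeq Q α) : Prop :=
  Order.IsSuccLimit α → ∃ tl, ConvTo s.t s.pos α tl

/-- `SCRed Q s t`: there is a strongly convergent transfinite sequence of `Q`-steps
from `s` to `t`. -/
def SCRed (Q : TRel Sg X) : TRel Sg X := fun a b =>
  ∃ (α : Ordinal.{0}) (s : TransSeq Q α), s.t 0 = a ∧ s.t α = b ∧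
    (Order.IsSuccLimit α → ConvTo s.t s.pos α b)

/-- The standard, ordinal-based infinitary rewrite relation `→∞_ord`:
strongly convergent transfinite rewrite sequences. -/
def iredOrd (R : TRS Sg X) : TRel Sg X := SCRed (RootStep R)

-- auxiliary facts about the term constructors
lemma node_ne_var (f : Sg.Sym) (args : Fin (Sg.ar f) → Tm Sg X) (x : X) :
    Tm.node f args ≠ Tm.var x := by
  intro h
  have h1 := congrArg (fun u => (PFunctor.M.dest u).1) h
  simp only [Tm.node, Tm.var, PFunctor.M.dest_mk] at h1
  have h2 : (Sum.inr f : X ⊕ Sg.Sym) = Sum.inl x := h1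
  cases h2

lemma node_inj_sym {f g : Sg.Sym} {ss : Fin (Sg.ar f) → Tm Sg X}
    {ts : Fin (Sg.ar g) → Tm Sg X} (h : Tm.node f ss = Tm.node g ts) : f = g := by
  have h1 := congrArg (fun u => (PFunctor.M.dest u).1) h
  simp only [Tm.node, PFunctor.M.dest_mk] at h1
  exact Sum.inr.inj h1

lemma node_inj_args {f : Sg.Sym} {ss ts : Fin (Sg.ar f) → Tm Sg X}
    (h : Tm.node f ss = Tm.node f ts) : ss = ts := by
  have h' : (PFunctor.M.mk ⟨Sum.inr f, ss⟩ : Tm Sg X) = PFunctor.M.mk ⟨Sum.inr f, ts⟩ := h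
  have h1 := PFunctor.M.mk_inj h'
  injection h1 with h2 h3

lemma var_inj {x y : X} (h : (Tm.var x : Tm Sg X) = Tm.var y) : x = y := by
  have h1 := congrArg (fun u => (PFunctor.M.dest u).1) h
  simp only [Tm.var, PFunctor.M.dest_mk] at h1
  exact Sum.inl.inj h1

lemma occurs_var_iff {x y : X} : Occurs x (Tm.var y : Tm Sg X) ↔ x = y := by
  constructor
  · intro h
    cases h with
    | here h => exact (var_inj h.symm)
    | deeper i h _ => exact absurd h.symm (node_ne_var _ _ _)
  · rintro rfl
    exact Occurs.here rfl

lemma occurs_node_iff {x : X} {f : Sg.Sym} {args : Fin (Sg.ar f) → Tm Sg X} :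
    Occurs x (Tm.node f args) ↔ ∃ i, Occurs x (args i) := by
  constructor
  · intro h
    cases h with
    | here h => exact absurd h (node_ne_var _ _ _)
    | deeper i h hocc =>
      obtain rfl := node_inj_sym h
      obtain rfl := node_inj_args h
      exact ⟨i, hocc⟩
  · rintro ⟨i, h⟩
    exact Occurs.deeper i rfl h

/-! ### Auxiliary development for the proof -/

section Basics

lemma tm_cases (t : Tm Sg X) :
    (∃ x, t = Tm.var x) ∨ ∃ f args, t = Tm.node f args := by
  have h := PFunctor.M.mk_dest t
  rcases hd : PFunctor.M.dest t with ⟨a, k⟩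
  rw [hd] at h
  cases a with
  | inl x =>
    left; refine ⟨x, ?_⟩
    rw [← h]
    have : k = fun e => e.elim := funext fun e => e.elim
    rw [Tm.var, this]
  | inr f => right; exact ⟨f, k, by rw [← h]; rfl⟩

lemma agree_refl : ∀ (n : ℕ) (t : Tm Sg X), Agree n t t
  | 0, _ => trivial
  | n+1, t => by
    rcases tm_cases t with ⟨x, rfl⟩ | ⟨f, args, rfl⟩
    · exact Or.inl ⟨x, rfl, rfl⟩
    · exact Or.inr ⟨f, args, args, rfl, rfl, fun i => agree_refl n _⟩

lemma agree_of_eq {n : ℕ} {s t : Tm Sg X} (h : s = t) : Agree n s t := h ▸ agree_refl n s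

lemma agree_symm : ∀ {n : ℕ} {s t : Tm Sg X}, Agree n s t → Agree n t s
  | 0, _, _, _ => trivial
  | n+1, _, _, h => by
    rcases h with ⟨x, rfl, rfl⟩ | ⟨f, ss, ts, rfl, rfl, hi⟩
    · exact Or.inl ⟨x, rfl, rfl⟩
    · exact Or.inr ⟨f, ts, ss, rfl, rfl, fun i => agree_symm (hi i)⟩

lemma agree_trans : ∀ {n : ℕ} {s t u : Tm Sg X}, Agree n s t → Agree n t u → Agree n s u
  | 0, _, _, _, _, _ => trivial
  | n+1, _, _, _, h1, h2 => by
    rcases h1 with ⟨x, rfl, rfl⟩ | ⟨f, ss, ts, rfl, rfl, hi⟩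
    · rcases h2 with ⟨y, hy, rfl⟩ | ⟨f, ss', ts', h, rfl, hi'⟩
      · exact Or.inl ⟨y, hy, rfl⟩
      · exact absurd h.symm (node_ne_var _ _ _)
    · rcases h2 with ⟨y, hy, rfl⟩ | ⟨g, ss', ts', h, rfl, hi'⟩
      · exact absurd hy (node_ne_var _ _ _)
      · obtain rfl := node_inj_sym h.symm
        obtain rfl := node_inj_args h.symm
        exact Or.inr ⟨_, ss, ts', rfl, rfl, fun i => agree_trans (hi i) (hi' i)⟩

lemma agree_mono : ∀ (m n : ℕ), m ≤ n → ∀ {s t : Tm Sg X}, Agree n s t → Agree m s t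
  | 0, _, _, _, _, _ => trivial
  | m+1, 0, h, _, _, _ => absurd h (by omega)
  | m+1, n+1, h, _, _, hst => by
    rcases hst with ⟨x, rfl, rfl⟩ | ⟨f, ss, ts, rfl, rfl, hi⟩
    · exact Or.inl ⟨x, rfl, rfl⟩
    · exact Or.inr ⟨f, ss, ts, rfl, rfl, fun i =>
        agree_mono m n (Nat.succ_le_succ_iff.mp h) (hi i)⟩

lemma agree_all_eq {s t : Tm Sg X} (h : ∀ n, Agree n s t) : s = t := by
  refine PFunctor.M.bisim (fun x y => ∀ n, Agree n x y) ?_ s t h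
  intro x y hxy
  rcases hxy 1 with ⟨z, rfl, rfl⟩ | ⟨f, ss, ts, rfl, rfl, _⟩
  · exact ⟨Sum.inl z, Empty.elim, Empty.elim, rfl, rfl, fun i => i.elim⟩
  · refine ⟨Sum.inr f, ss, ts, rfl, rfl, fun i n => ?_⟩
    rcases hxy (n+1) with ⟨z, hz, _⟩ | ⟨g, ss', ts', h1, h2, hi⟩
    · exact absurd hz (node_ne_var _ _ _)
    · obtain rfl := node_inj_sym h1
      obtain rfl := node_inj_args h1
      obtain rfl := node_inj_args h2
      exact hi i

lemma agree_one_var {x : X} {b : Tm Sg X} (h : Agree 1 (Tm.var x) b) : b = Tm.var x := by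
  rcases h with ⟨y, hy, rfl⟩ | ⟨f, ss, ts, hs, _, _⟩
  · rw [var_inj hy]
  · exact absurd hs.symm (node_ne_var _ _ _)

lemma agree_one_node {f : Sg.Sym} {as : Fin (Sg.ar f) → Tm Sg X} {b : Tm Sg X}
    (h : Agree 1 (Tm.node f as) b) : ∃ bs, b = Tm.node f bs := by
  rcases h with ⟨y, hy, _⟩ | ⟨g, ss, ts, hs, rfl, _⟩
  · exact absurd hy (node_ne_var _ _ _)
  · obtain rfl := node_inj_sym hs
    exact ⟨ts, rfl⟩

lemma stepAt_nil {Q : TRel Sg X} {s t : Tm Sg X} (h : StepAt Q [] s t) : Q s t := by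
  generalize hl : ([] : List ℕ) = l at h
  cases h with
  | here h => exact h
  | deeper i hstep heq => exact absurd hl (by simp)

lemma stepAt_cons {Q : TRel Sg X} {j : ℕ} {p : List ℕ} {s t : Tm Sg X}
    (h : StepAt Q (j :: p) s t) :
    ∃ (f : Sg.Sym) (ss ts : Fin (Sg.ar f) → Tm Sg X) (i : Fin (Sg.ar f)),
      (i : ℕ) = j ∧ s = Tm.node f ss ∧ t = Tm.node f ts ∧
      StepAt Q p (ss i) (ts i) ∧ ∀ k, k ≠ i → ss k = ts k := by
  generalize hl : j :: p = l at h
  cases h with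
  | here h => exact absurd hl (by simp)
  | @deeper f ss ts i p' hstep heq =>
    obtain ⟨h1, h2⟩ := List.cons.inj hl
    subst h2
    exact ⟨f, ss, ts, i, h1.symm, rfl, rfl, hstep, heq⟩

lemma stepAt_agree {Q : TRel Sg X} : ∀ {p : List ℕ} {s t : Tm Sg X},
    StepAt Q p s t → Agree p.length s t := by
  intro p s t h
  induction h with
  | here _ => trivial
  | @deeper f ss ts i p _ heq ih =>
    exact Or.inr ⟨f, ss, ts, rfl, rfl, fun j => by
      by_cases hj : j = i
      · subst hj; exact ih
      · exact agree_of_eq (heq j hj)⟩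

/-- `SubAt p t a`: `a` is the subterm of `t` at position `p`. -/
inductive SubAt : List ℕ → Tm Sg X → Tm Sg X → Prop
  | nil (t : Tm Sg X) : SubAt [] t t
  | cons {p : List ℕ} {a : Tm Sg X} {f : Sg.Sym} {args : Fin (Sg.ar f) → Tm Sg X}
      (i : Fin (Sg.ar f)) : SubAt p (args i) a → SubAt ((i : ℕ) :: p) (Tm.node f args) a

lemma subAt_nil {t a : Tm Sg X} (h : SubAt [] t a) : a = t := by
  generalize hl : ([] : List ℕ) = l at h
  cases h with
  | nil => rfl
  | cons i hsub => exact absurd hl (by simp)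

lemma subAt_cons_inv : ∀ {l : List ℕ} {t a : Tm Sg X}, SubAt l t a →
    ∀ {j : ℕ} {p : List ℕ} {f : Sg.Sym} {args : Fin (Sg.ar f) → Tm Sg X},
    l = j :: p → t = Tm.node f args →
    ∃ i : Fin (Sg.ar f), (i : ℕ) = j ∧ SubAt p (args i) a := by
  intro l t a h
  cases h with
  | nil => intro j p f args hl _; exact absurd hl (by simp)
  | @cons p' a' g args' i hsub =>
    intro j p f args hl ht
    obtain ⟨h1, h2⟩ := List.cons.inj hl
    obtain rfl := node_inj_sym ht
    obtain rfl := node_inj_args ht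
    subst h2
    exact ⟨i, h1, hsub⟩

lemma subAt_cons_node {j : ℕ} {p : List ℕ} {f : Sg.Sym} {args : Fin (Sg.ar f) → Tm Sg X}
    {a : Tm Sg X} (h : SubAt (j :: p) (Tm.node f args) a) :
    ∃ i : Fin (Sg.ar f), (i : ℕ) = j ∧ SubAt p (args i) a :=
  subAt_cons_inv h rfl rfl

lemma subAt_var {p : List ℕ} {x : X} {a : Tm Sg X} (h : SubAt p (Tm.var x) a) :
    p = [] ∧ a = Tm.var x := by
  cases p with
  | nil => exact ⟨rfl, subAt_nil h⟩
  | cons j p =>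
    exfalso
    generalize hl : (j :: p : List ℕ) = l at h
    generalize hv : Tm.var x = v at h
    cases h with
    | nil => exact absurd hl.symm (by simp)
    | cons i hsub => exact node_ne_var _ _ _ hv.symm

lemma subAt_unique : ∀ {p : List ℕ} {t a b : Tm Sg X}, SubAt p t a → SubAt p t b → a = b := by
  intro p t a b h1
  induction h1 with
  | nil => intro h2; exact (subAt_nil h2).symm
  | @cons p a f args i hsub ih =>
    intro h2
    obtain ⟨i', hi', hsub'⟩ := subAt_cons_node h2
    obtain rfl : i' = i := Fin.ext hi'
    exact ih hsub'

lemma subAt_append : ∀ {p : List ℕ} {t b : Tm Sg X}, SubAt p t b →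
    ∀ {f : Sg.Sym} {args : Fin (Sg.ar f) → Tm Sg X} (i : Fin (Sg.ar f)),
    b = Tm.node f args → SubAt (p ++ [(i : ℕ)]) t (args i) := by
  intro p t b h
  induction h with
  | nil => intro f args i hb; subst hb; exact SubAt.cons i (SubAt.nil _)
  | cons j _ ih => intro f args i hb; exact SubAt.cons j (ih i hb)

lemma subAt_of_agree : ∀ {p : List ℕ} {n : ℕ} {s s' a : Tm Sg X},
    Agree (p.length + n) s s' → SubAt p s a → ∃ b, SubAt p s' b ∧ Agree n a b := by
  intro p n s s' a hag hsub
  induction hsub generalizing s' with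
  | nil => exact ⟨s', SubAt.nil s', by simpa using hag⟩
  | @cons p a f args i hsub ih =>
    have hag' : Agree ((p.length + n) + 1) (Tm.node f args) s' := by
      simpa [List.length_cons, Nat.add_right_comm] using hag
    rcases hag' with ⟨x, hx, _⟩ | ⟨g, ss, ts, hs, rfl, hi⟩
    · exact absurd hx (node_ne_var _ _ _)
    · obtain rfl := node_inj_sym hs
      obtain rfl := node_inj_args hs
      obtain ⟨b, hb1, hb2⟩ := ih (hi i)
      exact ⟨b, SubAt.cons i hb1, hb2⟩

lemma stepAt_subAt_prefix {Q : TRel Sg X} : ∀ (p : List ℕ) {q : List ℕ} {s s' a : Tm Sg X},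
    StepAt Q (p ++ q) s s' → SubAt p s a → ∃ b, SubAt p s' b ∧ StepAt Q q a b := by
  intro p
  induction p with
  | nil =>
    intro q s s' a hstep hsub
    exact ⟨s', SubAt.nil s', (subAt_nil hsub) ▸ hstep⟩
  | cons j p ih =>
    intro q s s' a hstep hsub
    obtain ⟨f, ss, ts, i, hij, rfl, rfl, hstep', heq⟩ := stepAt_cons hstep
    obtain ⟨i', hi', hsub'⟩ := subAt_cons_node hsub
    have hii : i' = i := Fin.ext (hi'.trans hij.symm)
    rw [hii] at hsub'
    obtain ⟨b, hb1, hb2⟩ := ih hstep' hsub'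
    refine ⟨b, ?_, hb2⟩
    have := SubAt.cons (f := f) (args := ts) i hb1
    rwa [hij] at this

lemma stepAt_subAt_incomp {Q : TRel Sg X} : ∀ {p q : List ℕ} {s s' a : Tm Sg X},
    StepAt Q q s s' → SubAt p s a → ¬ p <+: q → ¬ q <+: p → SubAt p s' a := by
  intro p
  induction p with
  | nil => intro q s s' a _ _ hp _; exact absurd (List.nil_prefix) hp
  | cons j p ih =>
    intro q s s' a hstep hsub hp hq
    match q with
    | [] => exact absurd (List.nil_prefix) hq
    | (k :: q') =>
      obtain ⟨f, ss, ts, i, hik, rfl, rfl, hstep', heq⟩ := stepAt_cons hstep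
      obtain ⟨i', hi', hsub'⟩ := subAt_cons_node hsub
      by_cases hjk : j = k
      · have hii : i' = i := Fin.ext (hi'.trans (hjk.trans hik.symm))
        rw [hii] at hsub'
        have hp' : ¬ p <+: q' := fun h => hp (List.cons_prefix_cons.mpr ⟨hjk, h⟩)
        have hq' : ¬ q' <+: p := fun h => hq (List.cons_prefix_cons.mpr ⟨hjk.symm, h⟩)
        have := SubAt.cons (f := f) (args := ts) i (ih hstep' hsub' hp' hq')
        rwa [hik, ← hjk] at this
      · have hne : i' ≠ i := fun h => hjk (by rw [← hi', h, hik])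
        have := SubAt.cons (f := f) (args := ts) i' (heq i' hne ▸ hsub')
        rwa [hi'] at this

end Basics

/-- The classical notion of a limit ordinal. -/
def Ordinal.IsLimit (o : Ordinal) : Prop := o ≠ 0 ∧ ∀ a < o, Order.succ a < o

lemma Ordinal.isLimit_iff_isSuccLimit (o : Ordinal) : o.IsLimit ↔ Order.IsSuccLimit o := by
  rw [Ordinal.isSuccLimit_iff, Order.isSuccPrelimit_iff_succ_lt]; rfl

lemma Ordinal.IsLimit.pos {o : Ordinal} (h : o.IsLimit) : 0 < o := pos_iff_ne_zero.2 h.1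

section Seqs

variable {Q : TRel Sg X}

/-- A bundled strongly convergent transfinite rewrite sequence. -/
structure RSeq (Q : TRel Sg X) where
  len : Ordinal.{0}
  t : Ordinal.{0} → Tm Sg X
  pos : Ordinal.{0} → List ℕ
  step : ∀ β < len, StepAt Q (pos β) (t β) (t (β + 1))
  conv : ∀ l ≤ len, l.IsLimit → ConvTo t pos l (t l)

/-- Strongly convergent reduction with all steps at depth at least `d`. -/
def SCd (Q : TRel Sg X) (d : ℕ) : TRel Sg X := fun a b =>
  ∃ σ : RSeq Q, σ.t 0 = a ∧ σ.t σ.len = b ∧ ∀ β < σ.len, d ≤ (σ.pos β).length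

lemma scred_iff_scd {a b : Tm Sg X} : SCRed Q a b ↔ SCd Q 0 a b := by
  constructor
  · rintro ⟨α, s, h0, hα, hlim⟩
    refine ⟨⟨α, s.t, s.pos, s.step, fun l hl hl' => ?_⟩, h0, hα, fun β _ => Nat.zero_le _⟩
    rcases lt_or_eq_of_le hl with h | rfl
    · exact s.conv l h ((Ordinal.isLimit_iff_isSuccLimit l).1 hl')
    · rw [hα]; exact hlim ((Ordinal.isLimit_iff_isSuccLimit _).1 hl')
  · rintro ⟨σ, h0, hlen, _⟩
    exact ⟨σ.len, ⟨σ.t, σ.pos, σ.step, fun l hl hl' => σ.conv l hl.le ((Ordinal.isLimit_iff_isSuccLimit l).2 hl')⟩, h0, hlen,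
      fun hl' => by rw [← hlen]; exact σ.conv σ.len le_rfl ((Ordinal.isLimit_iff_isSuccLimit _).2 hl')⟩

lemma seq_chainAgree (σ : RSeq Q) (n : ℕ) :
    ∀ r, r ≤ σ.len → ∀ l, l ≤ r → (∀ β, l ≤ β → β < r → n ≤ (σ.pos β).length) →
    Agree n (σ.t l) (σ.t r) := by
  intro r
  induction r using Ordinal.induction with
  | _ r IH =>
    intro hr l hl hd
    rcases eq_or_lt_of_le hl with rfl | hlr
    · exact agree_refl n _
    rcases Ordinal.zero_or_succ_or_isSuccLimit r with rfl | ⟨δ, rfl⟩ | hlim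
    · exact absurd hlr ((not_lt_zero (a := l)))
    · have hδr : δ < Order.succ δ := Order.lt_succ_of_not_isMax (not_isMax δ)
      have hlδ : l ≤ δ := Order.le_of_lt_succ hlr
      have h1 : Agree n (σ.t l) (σ.t δ) :=
        IH δ hδr ((le_of_lt hδr).trans hr) l hlδ
          (fun β h1 h2 => hd β h1 (h2.trans hδr))
      have hstep := σ.step δ (lt_of_lt_of_le hδr hr)
      have h2 : Agree n (σ.t δ) (σ.t (δ + 1)) :=
        agree_mono n _ (hd δ hlδ hδr) (stepAt_agree hstep)
      rw [Ordinal.add_one_eq_succ] at h2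
      exact agree_trans h1 h2
    · obtain ⟨β₀, hβ₀, hA⟩ := (σ.conv r hr ((Ordinal.isLimit_iff_isSuccLimit r).2 hlim)).1 n
      have hβr : max l β₀ < r := max_lt hlr hβ₀
      have h1 : Agree n (σ.t l) (σ.t (max l β₀)) :=
        IH _ hβr ((le_of_lt hβr).trans hr) l (le_max_left _ _)
          (fun γ hγ1 hγ2 => hd γ hγ1 (hγ2.trans hβr))
      exact agree_trans h1 (hA _ (le_max_right _ _) hβr)

lemma seq_finAt (σ : RSeq Q) (d : ℕ) (r : Ordinal.{0}) (hr : r ≤ σ.len) :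
    {β : Ordinal.{0} | β < r ∧ (σ.pos β).length ≤ d}.Finite := by
  by_contra hinf
  rw [← Set.not_infinite, not_not] at hinf
  set B := {β : Ordinal.{0} | β < r ∧ (σ.pos β).length ≤ d} with hB
  let g : ℕ → Ordinal.{0} := fun n => Nat.rec (sInf B) (fun _ prev => sInf (B ∩ Set.Ioi prev)) n
  have hg0 : g 0 = sInf B := rfl
  have hgs : ∀ n, g (n + 1) = sInf (B ∩ Set.Ioi (g n)) := fun n => rfl
  have inv : ∀ n, g n ∈ B ∧ (B ∩ Set.Ioi (g n)).Infinite := by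
    intro n
    induction n with
    | zero =>
      refine ⟨csInf_mem hinf.nonempty, ?_⟩
      have hsub : B \ {sInf B} ⊆ B ∩ Set.Ioi (g 0) := by
        rintro x ⟨hx, hx2⟩
        refine ⟨hx, Set.mem_Ioi.2 (lt_of_le_of_ne ?_ ?_)⟩
        · exact csInf_le (OrderBot.bddBelow B) hx
        · simp only [Set.mem_singleton_iff] at hx2
          exact fun h => hx2 (by rw [← h]; rfl)
      exact Set.Infinite.mono hsub (Set.Infinite.diff hinf (Set.finite_singleton _))
    | succ n ih =>
      have hmem : g (n + 1) ∈ B ∩ Set.Ioi (g n) := by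
        rw [hgs]; exact csInf_mem ih.2.nonempty
      refine ⟨hmem.1, ?_⟩
      have hsub : (B ∩ Set.Ioi (g n)) \ {g (n+1)} ⊆ B ∩ Set.Ioi (g (n + 1)) := by
        rintro x ⟨hx, hx2⟩
        refine ⟨hx.1, Set.mem_Ioi.2 (lt_of_le_of_ne ?_ ?_)⟩
        · rw [hgs]; exact csInf_le (OrderBot.bddBelow _) hx
        · simp only [Set.mem_singleton_iff] at hx2
          exact fun h => hx2 h.symm
      exact Set.Infinite.mono hsub (Set.Infinite.diff ih.2 (Set.finite_singleton _))
  have hmono : ∀ n, g n < g (n + 1) := by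
    intro n
    have : g (n + 1) ∈ B ∩ Set.Ioi (g n) := by
      rw [hgs]; exact csInf_mem (inv n).2.nonempty
    exact this.2
  have hbdd := Ordinal.bddAbove_range g
  set lam := ⨆ n, g n with hlam
  have hglam : ∀ n, g n < lam := fun n =>
    lt_of_lt_of_le (hmono n) (le_ciSup hbdd (n + 1))
  have hlamr : lam ≤ r := ciSup_le (fun n => le_of_lt (inv n).1.1)
  have hlim : lam.IsLimit := by
    refine ⟨?_, fun c hc => ?_⟩
    · exact fun h => absurd (hglam 0) (by rw [h]; exact fun hlt => absurd hlt (not_lt_zero))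
    · obtain ⟨n, hn⟩ := (lt_ciSup_iff hbdd).1 hc
      exact lt_of_le_of_lt (Order.succ_le_of_lt hn) (hglam n)
  obtain ⟨β₀, hβ₀, hD⟩ := (σ.conv lam (hlamr.trans hr) hlim).2 (d + 1)
  obtain ⟨n, hn⟩ := (lt_ciSup_iff hbdd).1 hβ₀
  have h1 := hD (g n) (le_of_lt hn) (hglam n)
  have h2 := (inv n).1.2
  omega

lemma seq_finPos (σ : RSeq Q) (p : List ℕ) (l r : Ordinal.{0}) (hr : r ≤ σ.len) :
    {β : Ordinal.{0} | l ≤ β ∧ β < r ∧ σ.pos β = p}.Finite := by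
  refine Set.Finite.subset (seq_finAt σ p.length r hr) ?_
  rintro β ⟨_, hβr, hp⟩
  exact ⟨hβr, le_of_eq (by rw [hp])⟩

end Seqs

section IredAPI

lemma ired_gfp (R : TRS Sg X) :
    OrderHom.gfp (iredInnerHom R (ired R)) = ired R :=
  OrderHom.map_lfp (iredHom R)

lemma ired_coind {R : TRS Sg X} {V : TRel Sg X}
    (h : ∀ a b, V a b → relComp
      (ReflTransGen (fun s t => RootStep R s t ∨ liftRel (ired R) s t)) (liftRel V) a b) :
    ∀ a b, V a b → ired R a b := by
  have h2 : V ≤ (iredInnerHom R (ired R)) V := h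
  have h3 := OrderHom.le_gfp _ h2
  rw [ired_gfp] at h3
  exact h3

lemma isLimit_add_right {a b : Ordinal.{0}} (h : (a + b).IsLimit) (hb : b ≠ 0) :
    b.IsLimit := by
  refine ⟨hb, fun c hc => ?_⟩
  have h1 : a + Order.succ c < a + b := by
    rw [Ordinal.add_succ]
    exact h.2 (a + c) ((add_lt_add_iff_left a).2 hc)
  exact (add_lt_add_iff_left a).1 h1

end IredAPI

section Constructions

variable {Q : TRel Sg X}

lemma scd_refl (d : ℕ) (a : Tm Sg X) : SCd Q d a a := by
  refine ⟨⟨0, fun _ => a, fun _ => [], ?_, ?_⟩, rfl, rfl, ?_⟩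
  · intro β hβ; exact absurd hβ ((not_lt_zero (a := β)))
  · intro l hl hl'; exact absurd (nonpos_iff_eq_zero.mp hl) hl'.1
  · intro β hβ; exact absurd hβ ((not_lt_zero (a := β)))

lemma one_not_limit : ¬ (1 : Ordinal.{0}).IsLimit := by
  intro h
  have h1 : (0 : Ordinal.{0}) < 1 := zero_lt_one
  have := h.2 0 h1
  rw [Ordinal.succ_zero] at this
  exact lt_irrefl _ this

lemma scd_single {d : ℕ} {p : List ℕ} {a b : Tm Sg X} (h : StepAt Q p a b)
    (hd : d ≤ p.length) : SCd Q d a b := by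
  refine ⟨⟨1, fun β => if β = 0 then a else b, fun _ => p, ?_, ?_⟩, ?_, ?_, ?_⟩
  · intro β hβ
    have hβ0 : β = 0 := Ordinal.lt_one_iff_zero.mp hβ
    subst hβ0
    simp only [if_pos rfl, zero_add]
    rw [if_neg one_ne_zero]
    exact h
  · intro l hl hl'
    rcases lt_or_eq_of_le hl with h1 | rfl
    · exact absurd (Ordinal.lt_one_iff_zero.mp h1) hl'.1
    · exact absurd hl' one_not_limit
  · show (if (0 : Ordinal.{0}) = 0 then a else b) = a
    rw [if_pos rfl]
  · show (if (1 : Ordinal.{0}) = 0 then a else b) = b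
    rw [if_neg one_ne_zero]
  · intro β _; exact hd

lemma scd_mono {d d' : ℕ} (h : d' ≤ d) {a b : Tm Sg X} :
    SCd Q d a b → SCd Q d' a b := by
  rintro ⟨σ, h0, hl, hd⟩
  exact ⟨σ, h0, hl, fun β hβ => h.trans (hd β hβ)⟩

lemma scd_trans {d : ℕ} {a b c : Tm Sg X} (h1 : SCd Q d a b) (h2 : SCd Q d b c) :
    SCd Q d a c := by
  obtain ⟨σ, hσ0, hσe, hσd⟩ := h1
  obtain ⟨τ, hτ0, hτe, hτd⟩ := h2
  set A := σ.len + τ.len with hA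
  set T : Ordinal.{0} → Tm Sg X := fun β => if β < σ.len then σ.t β else τ.t (β - σ.len)
    with hT
  set P : Ordinal.{0} → List ℕ := fun β => if β < σ.len then σ.pos β else τ.pos (β - σ.len)
    with hP
  have hTsig : ∀ β, β < σ.len → T β = σ.t β := fun β hβ => if_pos hβ
  have hPsig : ∀ β, β < σ.len → P β = σ.pos β := fun β hβ => if_pos hβ
  have hTtau : ∀ δ, T (σ.len + δ) = τ.t δ := by
    intro δ
    show (if σ.len + δ < σ.len then σ.t (σ.len + δ) else τ.t (σ.len + δ - σ.len)) = τ.t δ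
    rw [if_neg (not_lt.2 (le_self_add (a := σ.len) (b := δ))), Ordinal.add_sub_cancel]
  have hPtau : ∀ δ, P (σ.len + δ) = τ.pos δ := by
    intro δ
    show (if σ.len + δ < σ.len then σ.pos (σ.len + δ) else τ.pos (σ.len + δ - σ.len)) = τ.pos δ
    rw [if_neg (not_lt.2 (le_self_add (a := σ.len) (b := δ))), Ordinal.add_sub_cancel]
  have hTmid : T σ.len = σ.t σ.len := by
    have := hTtau 0
    rw [add_zero] at this
    rw [this, hτ0, hσe]
  refine ⟨⟨A, T, P, ?_, ?_⟩, ?_, ?_, ?_⟩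
  · -- step
    intro β hβ
    show StepAt Q (P β) (T β) (T (β + 1))
    by_cases hβσ : β < σ.len
    · rw [hTsig β hβσ, hPsig β hβσ]
      have hstep := σ.step β hβσ
      by_cases hβ1 : β + 1 < σ.len
      · rw [hTsig _ hβ1]; exact hstep
      · have hle : β + 1 ≤ σ.len := by
          rw [Ordinal.add_one_eq_succ]; exact Order.succ_le_of_lt hβσ
        have heq : β + 1 = σ.len := le_antisymm hle (not_lt.1 hβ1)
        rw [heq, hTmid, ← heq]
        exact hstep
    · have hβσ' : σ.len ≤ β := not_lt.1 hβσ
      have hβeq : σ.len + (β - σ.len) = β := Ordinal.add_sub_cancel_of_le hβσ'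
      set δ := β - σ.len with hδdef
      have hδ : δ < τ.len := by
        have : σ.len + δ < σ.len + τ.len := by rw [hβeq]; exact hβ
        exact (add_lt_add_iff_left σ.len).1 this
      have e1 : T β = τ.t δ := by rw [← hβeq, hTtau]
      have e2 : P β = τ.pos δ := by rw [← hβeq, hPtau]
      have e3 : T (β + 1) = τ.t (δ + 1) := by
        have : β + 1 = σ.len + (δ + 1) := by rw [← hβeq, add_assoc]
        rw [this, hTtau]
      rw [e1, e2, e3]
      exact τ.step δ hδ
  · -- conv
    intro l hl hlim
    show ConvTo T P l (T l)
    rcases lt_trichotomy l σ.len with h1 | h1 | h1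
    · have hconv := σ.conv l h1.le hlim
      rw [hTsig l h1]
      constructor
      · intro n
        obtain ⟨β₀, hβ₀, hA'⟩ := hconv.1 n
        exact ⟨β₀, hβ₀, fun β hb1 hb2 => by
          rw [hTsig β (hb2.trans h1)]; exact hA' β hb1 hb2⟩
      · intro n
        obtain ⟨β₀, hβ₀, hA'⟩ := hconv.2 n
        exact ⟨β₀, hβ₀, fun β hb1 hb2 => by
          rw [hPsig β (hb2.trans h1)]; exact hA' β hb1 hb2⟩
    · subst h1
      have hconv := σ.conv σ.len le_rfl hlim
      rw [hTmid]
      constructor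
      · intro n
        obtain ⟨β₀, hβ₀, hA'⟩ := hconv.1 n
        exact ⟨β₀, hβ₀, fun β hb1 hb2 => by
          rw [hTsig β hb2]; exact hA' β hb1 hb2⟩
      · intro n
        obtain ⟨β₀, hβ₀, hA'⟩ := hconv.2 n
        exact ⟨β₀, hβ₀, fun β hb1 hb2 => by
          rw [hPsig β hb2]; exact hA' β hb1 hb2⟩
    · have hle : σ.len ≤ l := h1.le
      have hleq : σ.len + (l - σ.len) = l := Ordinal.add_sub_cancel_of_le hle
      set δ' := l - σ.len with hδ'def
      have hδ'0 : δ' ≠ 0 := by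
        intro h0
        rw [h0, add_zero] at hleq
        exact absurd hleq.symm (ne_of_gt h1)
      have hδ'lim : δ'.IsLimit := isLimit_add_right (by rw [hleq]; exact hlim) hδ'0
      have hδ'len : δ' ≤ τ.len := by
        have : σ.len + δ' ≤ σ.len + τ.len := by rw [hleq]; exact hl
        exact (add_le_add_iff_left σ.len).1 this
      have hconv := τ.conv δ' hδ'len hδ'lim
      have hTl : T l = τ.t δ' := by rw [← hleq, hTtau]
      rw [hTl]
      constructor
      · intro n
        obtain ⟨γ₀, hγ₀, hA'⟩ := hconv.1 n
        refine ⟨σ.len + γ₀, by rw [← hleq]; exact (add_lt_add_iff_left σ.len).2 hγ₀,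
          fun β hb1 hb2 => ?_⟩
        have hβσ : σ.len ≤ β := (le_self_add (a := σ.len) (b := γ₀)).trans hb1
        have hβeq : σ.len + (β - σ.len) = β := Ordinal.add_sub_cancel_of_le hβσ
        rw [← hβeq, hTtau]
        refine hA' _ ?_ ?_
        · have : σ.len + γ₀ ≤ σ.len + (β - σ.len) := by rw [hβeq]; exact hb1
          exact (add_le_add_iff_left σ.len).1 this
        · have : σ.len + (β - σ.len) < σ.len + δ' := by rw [hβeq, hleq]; exact hb2
          exact (add_lt_add_iff_left σ.len).1 this
      · intro n
        obtain ⟨γ₀, hγ₀, hA'⟩ := hconv.2 n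
        refine ⟨σ.len + γ₀, by rw [← hleq]; exact (add_lt_add_iff_left σ.len).2 hγ₀,
          fun β hb1 hb2 => ?_⟩
        have hβσ : σ.len ≤ β := (le_self_add (a := σ.len) (b := γ₀)).trans hb1
        have hβeq : σ.len + (β - σ.len) = β := Ordinal.add_sub_cancel_of_le hβσ
        rw [← hβeq, hPtau]
        refine hA' _ ?_ ?_
        · have : σ.len + γ₀ ≤ σ.len + (β - σ.len) := by rw [hβeq]; exact hb1
          exact (add_le_add_iff_left σ.len).1 this
        · have : σ.len + (β - σ.len) < σ.len + δ' := by rw [hβeq, hleq]; exact hb2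
          exact (add_lt_add_iff_left σ.len).1 this
  · -- start
    show T 0 = a
    by_cases h0 : (0 : Ordinal.{0}) < σ.len
    · rw [hTsig 0 h0]; exact hσ0
    · have hσ0' : σ.len = 0 := le_antisymm (not_lt.1 h0) (zero_le)
      have : T 0 = τ.t 0 := by
        have h' := hTtau 0
        rw [add_zero, hσ0'] at h'
        exact h'
      rw [this, hτ0, ← hσe, hσ0', hσ0]
  · -- end
    show T A = c
    have : T A = τ.t τ.len := by rw [hA, hTtau]
    rw [this, hτe]
  · -- depth
    intro β hβ
    show d ≤ (P β).length
    by_cases hβσ : β < σ.len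
    · rw [hPsig β hβσ]; exact hσd β hβσ
    · have hβσ' : σ.len ≤ β := not_lt.1 hβσ
      have hβeq : σ.len + (β - σ.len) = β := Ordinal.add_sub_cancel_of_le hβσ'
      have hδ : β - σ.len < τ.len := by
        have : σ.len + (β - σ.len) < σ.len + τ.len := by rw [hβeq]; exact hβ
        exact (add_lt_add_iff_left σ.len).1 this
      rw [← hβeq, hPtau]
      exact hτd _ hδ

end Constructions

section Wrap

variable {Q : TRel Sg X}

lemma agree_wrap {n : ℕ} {f : Sg.Sym} {args : Fin (Sg.ar f) → Tm Sg X} {i : Fin (Sg.ar f)}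
    {x y : Tm Sg X} (h : Agree n x y) :
    Agree n (Tm.node f (Function.update args i x)) (Tm.node f (Function.update args i y)) := by
  cases n with
  | zero => trivial
  | succ m =>
    refine Or.inr ⟨f, _, _, rfl, rfl, fun j => ?_⟩
    by_cases hj : j = i
    · subst hj; rw [Function.update_self, Function.update_self]
      exact agree_mono m (m + 1) (Nat.le_succ m) h
    · rw [Function.update_of_ne hj, Function.update_of_ne hj]
      exact agree_refl m _

lemma scd_wrap {d : ℕ} {f : Sg.Sym} {args : Fin (Sg.ar f) → Tm Sg X} {i : Fin (Sg.ar f)}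
    {b : Tm Sg X} (h : SCd Q d (args i) b) :
    SCd Q (d + 1) (Tm.node f args) (Tm.node f (Function.update args i b)) := by
  obtain ⟨σ, h0, he, hd⟩ := h
  refine ⟨⟨σ.len, fun β => Tm.node f (Function.update args i (σ.t β)),
    fun β => (i : ℕ) :: σ.pos β, ?_, ?_⟩, ?_, ?_, ?_⟩
  · intro β hβ
    exact StepAt.deeper i
      (by rw [Function.update_self, Function.update_self]; exact σ.step β hβ)
      (fun j hj => by rw [Function.update_of_ne hj, Function.update_of_ne hj])
  · intro l hl hlim
    have hconv := σ.conv l hl hlim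
    constructor
    · intro n
      obtain ⟨β₀, h1, h2⟩ := hconv.1 n
      exact ⟨β₀, h1, fun β hb1 hb2 => agree_wrap (h2 β hb1 hb2)⟩
    · intro n
      obtain ⟨β₀, h1, h2⟩ := hconv.2 n
      exact ⟨β₀, h1, fun β hb1 hb2 => (h2 β hb1 hb2).trans (Nat.le_succ _)⟩
  · show Tm.node f (Function.update args i (σ.t 0)) = Tm.node f args
    rw [h0, Function.update_eq_self]
  · show Tm.node f (Function.update args i (σ.t σ.len)) = _
    rw [he]
  · intro β hβ
    show d + 1 ≤ ((i : ℕ) :: σ.pos β).length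
    rw [List.length_cons]
    exact Nat.succ_le_succ (hd β hβ)

lemma scd_liftRel {d : ℕ} {a b : Tm Sg X} (h : liftRel (SCd Q d) a b) :
    SCd Q (d + 1) a b := by
  rcases h with rfl | ⟨f, ss, ts, rfl, rfl, hi⟩
  · exact scd_refl _ _
  · have main : ∀ k : ℕ, k ≤ Sg.ar f →
        SCd Q (d + 1) (Tm.node f ss)
          (Tm.node f (fun j => if (j : ℕ) < k then ts j else ss j)) := by
      intro k
      induction k with
      | zero =>
        intro _
        have he : (fun j : Fin (Sg.ar f) => if (j : ℕ) < 0 then ts j else ss j) = ss := by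
          funext j; rw [if_neg (Nat.not_lt_zero _)]
        rw [he]; exact scd_refl _ _
      | succ k ih =>
        intro hk
        have hk' : k < Sg.ar f := hk
        set i : Fin (Sg.ar f) := ⟨k, hk'⟩ with hidef
        refine scd_trans (ih (le_of_lt hk')) ?_
        have h2 : SCd Q d ((fun j : Fin (Sg.ar f) => if (j : ℕ) < k then ts j else ss j) i) (ts i) := by
          show SCd Q d (if (i : ℕ) < k then ts i else ss i) (ts i)
          rw [if_neg (by simp [hidef])]
          exact hi i
        have h3 := scd_wrap (f := f)
          (args := fun j : Fin (Sg.ar f) => if (j : ℕ) < k then ts j else ss j) (i := i) h2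
        have h4 : Function.update (fun j : Fin (Sg.ar f) => if (j : ℕ) < k then ts j else ss j) i (ts i)
            = fun j : Fin (Sg.ar f) => if (j : ℕ) < k + 1 then ts j else ss j := by
          funext j
          by_cases hj : j = i
          · subst hj; rw [Function.update_self, if_pos (by simp [hidef])]
          · rw [Function.update_of_ne hj]
            have hjk : (j : ℕ) ≠ k := fun h => hj (Fin.ext (by rw [h, hidef]))
            by_cases hlt : (j : ℕ) < k
            · rw [if_pos hlt, if_pos (Nat.lt_succ_of_lt hlt)]
            · rw [if_neg hlt, if_neg (by omega)]
        rwa [h4] at h3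
    have hfin := main (Sg.ar f) le_rfl
    have he : (fun j : Fin (Sg.ar f) => if (j : ℕ) < Sg.ar f then ts j else ss j) = ts := by
      funext j; rw [if_pos j.isLt]
    rwa [he] at hfin

lemma scd_of_rtg {R : TRS Sg X} {W : TRel Sg X}
    (hW : ∀ a b, W a b → SCd (RootStep R) 0 a b) {a b : Tm Sg X}
    (h : ReflTransGen (fun s t => RootStep R s t ∨ liftRel W s t) a b) :
    SCd (RootStep R) 0 a b := by
  induction h with
  | refl => exact scd_refl _ _
  | tail h1 h2 ih =>
    refine scd_trans ih ?_
    rcases h2 with h2 | h2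
    · exact scd_single (StepAt.here h2) (Nat.zero_le _)
    · refine scd_mono (Nat.zero_le 1) (scd_liftRel ?_)
      exact liftRel_mono (fun x y hxy => hW x y hxy) _ _ h2

end Wrap

section OmegaConcat

variable {Q : TRel Sg X}

lemma omega_concat (v : ℕ → Tm Sg X) (b : Tm Sg X) (σs : ℕ → RSeq Q)
    (h0 : ∀ n, (σs n).t 0 = v n) (hend : ∀ n, (σs n).t (σs n).len = v (n + 1))
    (hdep : ∀ n β, β < (σs n).len → n ≤ ((σs n).pos β).length)
    (hagree : ∀ n, Agree n (v n) b)
    (hne : ∀ n, ∃ k, n ≤ k ∧ (σs k).len ≠ 0) :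
    SCd Q 0 (v 0) b := by
  classical
  set S : ℕ → Ordinal.{0} := fun n => Nat.rec 0 (fun k s => s + (σs k).len) n with hSdef
  have hSs : ∀ n, S (n + 1) = S n + (σs n).len := fun n => rfl
  have hS0 : S 0 = 0 := rfl
  have hSmono : ∀ {m n : ℕ}, m ≤ n → S m ≤ S n := by
    intro m n h
    induction n with
    | zero => rw [Nat.le_zero.mp h]
    | succ n ih =>
      rcases Nat.lt_or_ge m (n + 1) with h' | h'
      · exact (ih (Nat.lt_succ_iff.mp h')).trans
          (by rw [hSs]; exact le_self_add)
      · rw [Nat.le_antisymm h h']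
  have hflat : ∀ k j, k ≤ j → S j ≤ S k → v j = v k := by
    intro k j hkj hSjk
    induction j with
    | zero => rw [Nat.le_zero.mp hkj]
    | succ j ih =>
      rcases Nat.lt_or_ge k (j + 1) with h' | h'
      · have hkj' : k ≤ j := Nat.lt_succ_iff.mp h'
        have e1 : S (j + 1) = S j :=
          le_antisymm (hSjk.trans (hSmono hkj'))
            (by rw [hSs]; exact le_self_add)
        have e2 : (σs j).len = 0 := by
          rw [← Ordinal.add_sub_cancel (S j) (σs j).len, ← hSs, e1, Ordinal.sub_self]
        have e3 : v (j + 1) = v j := by rw [← hend j, e2, h0 j]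
        rw [e3]
        exact ih hkj' (by rw [← e1]; exact hSjk)
      · rw [Nat.le_antisymm hkj h']
  have hbdd := Ordinal.bddAbove_range S
  set A := ⨆ n, S n with hA
  have hSA : ∀ n, S n < A := by
    intro n
    obtain ⟨k, hk1, hk2⟩ := hne n
    have h1 : S k < S (k + 1) := by
      rw [hSs]
      have h2 : S k + 0 < S k + (σs k).len :=
        (add_lt_add_iff_left _).2 (pos_iff_ne_zero.2 hk2)
      rwa [add_zero] at h2
    exact lt_of_le_of_lt (hSmono hk1) (lt_of_lt_of_le h1 (le_ciSup hbdd (k + 1)))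
  have hAlim : A.IsLimit := by
    refine ⟨?_, fun c hc => ?_⟩
    · intro h
      have h1 := hSA 0
      rw [h] at h1
      exact absurd h1 (not_lt_zero)
    · obtain ⟨n, hn⟩ := (lt_ciSup_iff hbdd).1 hc
      exact lt_of_le_of_lt (Order.succ_le_of_lt hn) (hSA n)
  have hex : ∀ β, β < A → ∃ n, β < S (n + 1) := by
    intro β hβ
    obtain ⟨n, hn⟩ := (lt_ciSup_iff hbdd).1 hβ
    cases n with
    | zero => rw [hS0] at hn; exact absurd hn ((not_lt_zero (a := β)))
    | succ m => exact ⟨m, hn⟩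
  set idx : Ordinal.{0} → ℕ := fun β => if h : β < A then Nat.find (hex β h) else 0
    with hidx
  have idx_spec : ∀ β (h : β < A), β < S (idx β + 1) := by
    intro β h
    have e : idx β = Nat.find (hex β h) := dif_pos h
    rw [e]
    exact Nat.find_spec (hex β h)
  have idx_min : ∀ β (h : β < A) (m : ℕ), β < S (m + 1) → idx β ≤ m := by
    intro β h m hm
    have e : idx β = Nat.find (hex β h) := dif_pos h
    rw [e]
    exact Nat.find_min' _ hm
  have idx_le : ∀ β, β < A → S (idx β) ≤ β := by
    intro β h
    rcases hn : idx β with _ | m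
    · rw [hS0]; exact (zero_le (a := β))
    · by_contra hc
      have h2 := idx_min β h m (not_le.1 hc)
      omega
  set T : Ordinal.{0} → Tm Sg X :=
    fun β => if h : β < A then (σs (idx β)).t (β - S (idx β)) else b with hT
  set P : Ordinal.{0} → List ℕ :=
    fun β => if h : β < A then (σs (idx β)).pos (β - S (idx β)) else [] with hP
  have hTeq : ∀ β, β < A → T β = (σs (idx β)).t (β - S (idx β)) := fun β h => dif_pos h
  have hPeq : ∀ β, β < A → P β = (σs (idx β)).pos (β - S (idx β)) := fun β h => dif_pos h
  have hTA : T A = b := dif_neg (lt_irrefl A)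
  have key1 : ∀ n δ, δ < (σs n).len →
      T (S n + δ) = (σs n).t δ ∧ P (S n + δ) = (σs n).pos δ := by
    intro n δ hδ
    have hlt : S n + δ < S (n + 1) := by
      rw [hSs]; exact (add_lt_add_iff_left _).2 hδ
    have hltA : S n + δ < A := lt_of_lt_of_le hlt (hSA (n + 1)).le
    have hidxeq : idx (S n + δ) = n := by
      have h1 : idx (S n + δ) ≤ n := idx_min _ hltA n hlt
      by_contra hne'
      have hlt2 : idx (S n + δ) + 1 ≤ n := by omega
      have h5 := idx_spec _ hltA
      have h3 : S (idx (S n + δ) + 1) ≤ S n := hSmono hlt2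
      have h4 : S n ≤ S n + δ := le_self_add
      exact absurd (lt_of_lt_of_le h5 (h3.trans h4)) (lt_irrefl _)
    constructor
    · rw [hTeq _ hltA, hidxeq, Ordinal.add_sub_cancel]
    · rw [hPeq _ hltA, hidxeq, Ordinal.add_sub_cancel]
  have key2 : ∀ n, T (S n) = v n := by
    intro n
    have hltA := hSA n
    have hm := idx_le (S n) hltA
    have hms := idx_spec (S n) hltA
    have hTm : T (S n) = (σs (idx (S n))).t (S n - S (idx (S n))) := hTeq _ hltA
    rcases Nat.lt_or_ge (idx (S n)) n with hlt | hge
    · exact absurd (lt_of_lt_of_le hms (hSmono hlt)) (lt_irrefl _)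
    · have hsub0 : S n - S (idx (S n)) = 0 := Ordinal.sub_eq_zero_iff_le.2 (hSmono hge)
      rw [hTm, hsub0, h0]
      exact hflat n _ hge hm
  have hstepdata : ∀ β, β < A →
      (β - S (idx β)) < (σs (idx β)).len ∧ S (idx β) + (β - S (idx β)) = β := by
    intro β hβ
    have h1 : S (idx β) + (β - S (idx β)) = β :=
      Ordinal.add_sub_cancel_of_le (idx_le β hβ)
    have h2 : β - S (idx β) < (σs (idx β)).len := by
      have h5 := idx_spec β hβ
      rw [hSs] at h5
      have h3 : S (idx β) + (β - S (idx β)) < S (idx β) + (σs (idx β)).len := by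
        rw [h1]; exact h5
      exact (add_lt_add_iff_left _).1 h3
    exact ⟨h2, h1⟩
  refine ⟨⟨A, T, P, ?_, ?_⟩, ?_, ?_, ?_⟩
  · -- step
    intro β hβ
    show StepAt Q (P β) (T β) (T (β + 1))
    obtain ⟨hδ, heq⟩ := hstepdata β hβ
    have e1 := hTeq β hβ
    have e2 := hPeq β hβ
    have hstep := (σs (idx β)).step _ hδ
    have hδ1 : (β - S (idx β)) + 1 ≤ (σs (idx β)).len := by
      rw [Ordinal.add_one_eq_succ]; exact Order.succ_le_of_lt hδ
    have e3 : T (β + 1) = (σs (idx β)).t ((β - S (idx β)) + 1) := by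
      rcases lt_or_eq_of_le hδ1 with h' | h'
      · have h6 := (key1 (idx β) _ h').1
        rw [← h6, ← add_assoc, heq]
      · have hb1 : β + 1 = S (idx β + 1) := by
          rw [hSs, ← h', ← add_assoc, heq]
        rw [hb1, key2 (idx β + 1), ← hend (idx β), ← h']
    rw [e1, e2, e3]
    exact hstep
  · -- conv
    intro l hl hlim
    show ConvTo T P l (T l)
    have transfer : ∀ (n : ℕ) (D : Ordinal.{0}), S n + D = l → D ≤ (σs n).len →
        D.IsLimit → T l = (σs n).t D → ConvTo T P l (T l) := by
      intro n D hD1 hD2 hD3 hD4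
      rw [hD4]
      have hconv := (σs n).conv D hD2 hD3
      constructor
      · intro m
        obtain ⟨γ₀, hγ₀, hA'⟩ := hconv.1 m
        refine ⟨S n + γ₀, by rw [← hD1]; exact (add_lt_add_iff_left _).2 hγ₀,
          fun β hb1 hb2 => ?_⟩
        have hβS : S n ≤ β := (le_self_add).trans hb1
        have hβeq : S n + (β - S n) = β := Ordinal.add_sub_cancel_of_le hβS
        have hδβ : β - S n < D := by
          have h5 : S n + (β - S n) < S n + D := by rw [hβeq, hD1]; exact hb2
          exact (add_lt_add_iff_left _).1 h5
        have hδlen : β - S n < (σs n).len := lt_of_lt_of_le hδβ hD2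
        rw [← hβeq, (key1 n _ hδlen).1]
        refine hA' _ ?_ hδβ
        have h5 : S n + γ₀ ≤ S n + (β - S n) := by rw [hβeq]; exact hb1
        exact (add_le_add_iff_left _).1 h5
      · intro m
        obtain ⟨γ₀, hγ₀, hA'⟩ := hconv.2 m
        refine ⟨S n + γ₀, by rw [← hD1]; exact (add_lt_add_iff_left _).2 hγ₀,
          fun β hb1 hb2 => ?_⟩
        have hβS : S n ≤ β := (le_self_add).trans hb1
        have hβeq : S n + (β - S n) = β := Ordinal.add_sub_cancel_of_le hβS
        have hδβ : β - S n < D := by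
          have h5 : S n + (β - S n) < S n + D := by rw [hβeq, hD1]; exact hb2
          exact (add_lt_add_iff_left _).1 h5
        have hδlen : β - S n < (σs n).len := lt_of_lt_of_le hδβ hD2
        rw [← hβeq, (key1 n _ hδlen).2]
        refine hA' _ ?_ hδβ
        have h5 : S n + γ₀ ≤ S n + (β - S n) := by rw [hβeq]; exact hb1
        exact (add_le_add_iff_left _).1 h5
    rcases eq_or_lt_of_le hl with rfl | hlA
    · -- l = A
      rw [hTA]
      have hidxge : ∀ (m : ℕ) β, S m ≤ β → (h : β < A) → m ≤ idx β := by
        intro m β hb1 h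
        by_contra hc
        push_neg at hc
        have h3 : S (idx β + 1) ≤ S m := hSmono hc
        exact absurd (lt_of_lt_of_le (idx_spec β h) (h3.trans hb1)) (lt_irrefl β)
      constructor
      · intro n
        refine ⟨S n, hSA n, fun β hb1 hb2 => ?_⟩
        obtain ⟨hδ, heq⟩ := hstepdata β hb2
        have hmn : n ≤ idx β := hidxge n β hb1 hb2
        have hc1 : Agree (idx β) ((σs (idx β)).t 0) ((σs (idx β)).t (β - S (idx β))) :=
          seq_chainAgree (σs (idx β)) (idx β) _ hδ.le 0 (zero_le)
            (fun γ _ hγ => hdep (idx β) γ (lt_of_lt_of_le hγ hδ.le))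
        rw [h0] at hc1
        have hc2 : Agree (idx β) (T β) b := by
          rw [hTeq β hb2]
          exact agree_trans (agree_symm hc1) (hagree (idx β))
        exact agree_mono n (idx β) hmn hc2
      · intro n
        refine ⟨S n, hSA n, fun β hb1 hb2 => ?_⟩
        obtain ⟨hδ, heq⟩ := hstepdata β hb2
        have hmn : n ≤ idx β := hidxge n β hb1 hb2
        rw [hPeq β hb2]
        exact hmn.trans (hdep (idx β) _ hδ)
    · -- l < A
      obtain ⟨hδ, heq⟩ := hstepdata l hlA
      rcases eq_or_ne (l - S (idx l)) 0 with h0' | h0'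
      · -- boundary case : l = S (idx l)
        obtain ⟨N, hN⟩ : ∃ N, idx l = N := ⟨_, rfl⟩
        rw [hN] at hδ heq h0'
        have hlS : l = S N := by rw [← heq, h0', add_zero]
        have hN0 : N ≠ 0 := by
          intro h
          exact hlim.1 (by rw [hlS, h, hS0])
        have hPex : ∃ m, l ≤ S (m + 1) := ⟨N, by rw [hlS]; exact hSmono (Nat.le_succ _)⟩
        set m₀ := Nat.find hPex with hm₀
        have hm₀spec : l ≤ S (m₀ + 1) := Nat.find_spec hPex
        have hm₀min : ∀ k, k < m₀ → S (k + 1) < l := by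
          intro k hk
          exact not_le.1 (Nat.find_min hPex hk)
        have hSm₀l : S m₀ < l := by
          rcases hm : m₀ with _ | k
          · rw [hS0]; exact hlim.pos
          · exact hm₀min k (by omega)
        have hm₀lt : m₀ < N := by
          obtain ⟨j, hj⟩ := Nat.exists_eq_succ_of_ne_zero hN0
          have h5 : l ≤ S (j + 1) := by rw [hlS, hj]
          have h6 := Nat.find_min' hPex h5
          omega
        have heq2 : S (m₀ + 1) = l :=
          le_antisymm (by rw [hlS]; exact hSmono (Nat.succ_le_of_lt hm₀lt)) hm₀spec
        have hlen0 : (σs m₀).len ≠ 0 := by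
          intro h
          rw [hSs, h, add_zero] at heq2
          exact absurd heq2 (ne_of_lt hSm₀l)
        refine transfer m₀ ((σs m₀).len) (by rw [← hSs]; exact heq2) le_rfl ?_ ?_
        · exact isLimit_add_right (by rw [← hSs, heq2]; exact hlim) hlen0
        · have hTl : T l = v (m₀ + 1) := by rw [← heq2]; exact key2 (m₀ + 1)
          rw [hTl, ← hend m₀]
      · exact transfer (idx l) (l - S (idx l)) heq hδ.le
          (isLimit_add_right (by rw [heq]; exact hlim) h0') (hTeq l hlA)
  · -- start
    have h5 := key2 0
    rw [hS0] at h5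
    exact h5
  · exact hTA
  · intro β hβ
    exact Nat.zero_le _

end OmegaConcat

section Forward

lemma ired_le_iredOrd (R : TRS Sg X) : ∀ a b : Tm Sg X, ired R a b → iredOrd R a b := by
  have hW : ∀ a b : Tm Sg X, iredOrd R a b → SCd (RootStep R) 0 a b :=
    fun a b h => scred_iff_scd.mp h
  set G := OrderHom.gfp (iredInnerHom R (iredOrd R)) with hGdef
  have hGfix : (iredInnerHom R (iredOrd R)) G = G := OrderHom.map_gfp _
  have hGunfold : ∀ a b, G a b → relComp
      (ReflTransGen (fun s t => RootStep R s t ∨ liftRel (iredOrd R) s t))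
      (liftRel G) a b := by
    intro a b h
    rw [← hGfix] at h
    exact h
  set D : ℕ → TRel Sg X := fun n => (liftRel (Sg := Sg) (X := X))^[n] G with hD
  have hD0 : D 0 = G := rfl
  have hDsucc : ∀ n, D (n + 1) = liftRel (D n) := fun n =>
    Function.iterate_succ_apply' _ _ _
  have d_agree : ∀ n (a b : Tm Sg X), D n a b → Agree n a b := by
    intro n
    induction n with
    | zero => intro a b _; trivial
    | succ n ih =>
      intro a b h
      rw [hDsucc] at h
      rcases h with rfl | ⟨f, ss, ts, rfl, rfl, hi⟩
      · exact agree_refl _ _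
      · exact Or.inr ⟨f, ss, ts, rfl, rfl, fun i => ih _ _ (hi i)⟩
  have d_step : ∀ n (a b : Tm Sg X), D n a b → ∃ c, SCd (RootStep R) n a c ∧ D (n + 1) c b := by
    intro n
    induction n with
    | zero =>
      intro a b h
      obtain ⟨u, h1, h2⟩ := hGunfold a b h
      refine ⟨u, scd_of_rtg hW h1, ?_⟩
      rw [hDsucc]
      exact h2
    | succ n ih =>
      intro a b h
      rw [hDsucc] at h
      rcases h with rfl | ⟨f, ss, ts, rfl, rfl, hi⟩
      · refine ⟨a, scd_refl _ _, ?_⟩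
        rw [hDsucc]
        exact Or.inl rfl
      · choose cs h1 h2 using fun i => ih _ _ (hi i)
        refine ⟨Tm.node f cs, ?_, ?_⟩
        · exact scd_liftRel (Or.inr ⟨f, ss, cs, rfl, rfl, h1⟩)
        · rw [hDsucc]
          exact Or.inr ⟨f, cs, ts, rfl, rfl, h2⟩
  have hmain : ∀ a b : Tm Sg X, G a b → iredOrd R a b := by
    intro a b hG
    have hG0 : D 0 a b := hG
    let F : ∀ _ : ℕ, {c : Tm Sg X // D _ c b} := fun n =>
      Nat.rec (motive := fun n => {c : Tm Sg X // D n c b}) ⟨a, hG0⟩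
        (fun n p => ⟨(d_step n p.1 b p.2).choose, (d_step n p.1 b p.2).choose_spec.2⟩) n
    set v : ℕ → Tm Sg X := fun n => (F n).1 with hv
    have hvD : ∀ n, D n (v n) b := fun n => (F n).2
    have hchunk : ∀ n, SCd (RootStep R) n (v n) (v (n + 1)) := fun n =>
      (d_step n (F n).1 b (F n).2).choose_spec.1
    have hv0 : v 0 = a := rfl
    by_cases hfin : ∃ n, v n = b
    · obtain ⟨n, hn⟩ := hfin
      have hall : ∀ m, SCd (RootStep R) 0 (v 0) (v m) := by
        intro m
        induction m with
        | zero => exact scd_refl _ _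
        | succ m ih => exact scd_trans ih (scd_mono (Nat.zero_le m) (hchunk m))
      have h5 := hall n
      rw [hn, hv0] at h5
      exact scred_iff_scd.mpr h5
    · push_neg at hfin
      have hagree' : ∀ n, Agree n (v n) b := fun n => d_agree n _ _ (hvD n)
      choose σsfun hσ0 hσe hσd using hchunk
      have hne : ∀ n, ∃ k, n ≤ k ∧ (σsfun k).len ≠ 0 := by
        intro n
        by_contra hc
        push_neg at hc
        have hvconst : ∀ k, n ≤ k → v k = v n := by
          intro k hk
          induction k with
          | zero => rw [Nat.le_zero.mp hk]
          | succ k ih =>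
            rcases Nat.lt_or_ge k n with h' | h'
            · have : n = k + 1 := by omega
              rw [this]
            · have h6 : v (k + 1) = v k := by rw [← hσe k, hc k h', hσ0 k]
              rw [h6]
              exact ih h'
        have heqb : v n = b := by
          apply agree_all_eq
          intro m
          have h1 := hagree' (max m n)
          have h2 := hvconst (max m n) (le_max_right _ _)
          rw [h2] at h1
          exact agree_mono m (max m n) (le_max_left _ _) h1
        exact hfin n heqb
      have h7 := omega_concat v b σsfun hσ0 hσe (fun n β hβ => hσd n β hβ) hagree' hne
      rw [hv0] at h7
      exact scred_iff_scd.mpr h7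
  have hle : (iredHom R) (iredOrd R) ≤ iredOrd R := hmain
  have h8 := OrderHom.lfp_le (iredHom R) hle
  exact fun a b h => h8 a b h

end Forward

section Backward

variable {Q : TRel Sg X}

lemma prefix_of_self {p : List ℕ} (h : p = q) : p <+: q := ⟨[], by rw [List.append_nil, h]⟩

lemma rseq_stableVar (σ : RSeq Q) {p : List ℕ} {x : X} :
    ∀ r, r ≤ σ.len → ∀ l, l ≤ r →
    (∀ β, l ≤ β → β < r → ¬ σ.pos β <+: p) →
    SubAt p (σ.t l) (Tm.var x) → SubAt p (σ.t r) (Tm.var x) := by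
  intro r
  induction r using Ordinal.induction with
  | _ r IH =>
    intro hr l hl hno hsub
    rcases eq_or_lt_of_le hl with rfl | hlr
    · exact hsub
    rcases Ordinal.zero_or_succ_or_isSuccLimit r with rfl | ⟨δ, rfl⟩ | hlim
    · exact absurd hlr ((not_lt_zero (a := l)))
    · have hδr : δ < Order.succ δ := Order.lt_succ_of_not_isMax (not_isMax δ)
      have hlδ : l ≤ δ := Order.le_of_lt_succ hlr
      have hsubδ : SubAt p (σ.t δ) (Tm.var x) :=
        IH δ hδr ((le_of_lt hδr).trans hr) l hlδ
          (fun β h1 h2 => hno β h1 (h2.trans hδr)) hsub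
      have hstep := σ.step δ (lt_of_lt_of_le hδr hr)
      have hnoδ : ¬ σ.pos δ <+: p := hno δ hlδ hδr
      have hres : SubAt p (σ.t (δ + 1)) (Tm.var x) := by
        by_cases hpq : p <+: σ.pos δ
        · obtain ⟨q, hq⟩ := hpq
          rw [← hq] at hstep
          obtain ⟨c, hc1, hc2⟩ := stepAt_subAt_prefix p hstep hsubδ
          cases q with
          | nil =>
            have hpp : σ.pos δ = p := by rw [← hq, List.append_nil]
            exact absurd (prefix_of_self hpp) hnoδ
          | cons j q' =>
            obtain ⟨g, ss, ts, i, _, hvar, _, _, _⟩ := stepAt_cons hc2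
            exact absurd hvar.symm (node_ne_var _ _ _)
        · exact stepAt_subAt_incomp hstep hsubδ hpq hnoδ
      rwa [Ordinal.add_one_eq_succ] at hres
    · obtain ⟨β₀, hβ₀, hA⟩ := (σ.conv r hr ((Ordinal.isLimit_iff_isSuccLimit r).2 hlim)).1 (p.length + 1)
      have hβr : max l β₀ < r := max_lt hlr hβ₀
      have hsubβ : SubAt p (σ.t (max l β₀)) (Tm.var x) :=
        IH _ hβr ((le_of_lt hβr).trans hr) l (le_max_left _ _)
          (fun γ h1 h2 => hno γ h1 (h2.trans hβr)) hsub
      have hag : Agree (p.length + 1) (σ.t (max l β₀)) (σ.t r) :=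
        hA _ (le_max_right _ _) hβr
      obtain ⟨c, hc1, hc2⟩ := subAt_of_agree hag hsubβ
      rwa [agree_one_var hc2] at hc1

lemma rseq_stableNode (σ : RSeq Q) {p : List ℕ} {f : Sg.Sym} :
    ∀ r, r ≤ σ.len → ∀ l, l ≤ r →
    (∀ β, l ≤ β → β < r → ¬ σ.pos β <+: p) →
    ∀ {as : Fin (Sg.ar f) → Tm Sg X}, SubAt p (σ.t l) (Tm.node f as) →
    ∃ bs, SubAt p (σ.t r) (Tm.node f bs) := by
  intro r
  induction r using Ordinal.induction with
  | _ r IH =>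
    intro hr l hl hno as hsub
    rcases eq_or_lt_of_le hl with rfl | hlr
    · exact ⟨as, hsub⟩
    rcases Ordinal.zero_or_succ_or_isSuccLimit r with rfl | ⟨δ, rfl⟩ | hlim
    · exact absurd hlr ((not_lt_zero (a := l)))
    · have hδr : δ < Order.succ δ := Order.lt_succ_of_not_isMax (not_isMax δ)
      have hlδ : l ≤ δ := Order.le_of_lt_succ hlr
      obtain ⟨bs, hsubδ⟩ :=
        IH δ hδr ((le_of_lt hδr).trans hr) l hlδ
          (fun β h1 h2 => hno β h1 (h2.trans hδr)) hsub
      have hstep := σ.step δ (lt_of_lt_of_le hδr hr)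
      have hnoδ : ¬ σ.pos δ <+: p := hno δ hlδ hδr
      have hres : ∃ cs, SubAt p (σ.t (δ + 1)) (Tm.node f cs) := by
        by_cases hpq : p <+: σ.pos δ
        · obtain ⟨q, hq⟩ := hpq
          rw [← hq] at hstep
          obtain ⟨c, hc1, hc2⟩ := stepAt_subAt_prefix p hstep hsubδ
          cases q with
          | nil =>
            have hpp : σ.pos δ = p := by rw [← hq, List.append_nil]
            exact absurd (prefix_of_self hpp) hnoδ
          | cons j q' =>
            obtain ⟨g, ss, ts, i, _, hnode, hc, _, _⟩ := stepAt_cons hc2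
            obtain rfl := node_inj_sym hnode
            rw [hc] at hc1
            exact ⟨ts, hc1⟩
        · exact ⟨bs, stepAt_subAt_incomp hstep hsubδ hpq hnoδ⟩
      obtain ⟨cs, hcs⟩ := hres
      rw [Ordinal.add_one_eq_succ] at hcs
      exact ⟨cs, hcs⟩
    · obtain ⟨β₀, hβ₀, hA⟩ := (σ.conv r hr ((Ordinal.isLimit_iff_isSuccLimit r).2 hlim)).1 (p.length + 1)
      have hβr : max l β₀ < r := max_lt hlr hβ₀
      obtain ⟨bs, hsubβ⟩ :=
        IH _ hβr ((le_of_lt hβr).trans hr) l (le_max_left _ _)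
          (fun γ h1 h2 => hno γ h1 (h2.trans hβr)) hsub
      have hag : Agree (p.length + 1) (σ.t (max l β₀)) (σ.t r) :=
        hA _ (le_max_right _ _) hβr
      obtain ⟨c, hc1, hc2⟩ := subAt_of_agree hag hsubβ
      obtain ⟨cs, rfl⟩ := agree_one_node hc2
      exact ⟨cs, hc1⟩

lemma iredOrd_le_ired (R : TRS Sg X) : ∀ a b : Tm Sg X, iredOrd R a b → ired R a b := by
  intro a b hab
  obtain ⟨σ, hσ0, hσe, _⟩ := scred_iff_scd.mp hab
  have main : ∀ r' : Ordinal.{0}, ∀ (p : List ℕ) (l r : Ordinal.{0}) (u w : Tm Sg X),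
      l ≤ r → r ≤ r' → r ≤ σ.len →
      (∀ β, l ≤ β → β < r → ¬ (σ.pos β <+: p ∧ σ.pos β ≠ p)) →
      SubAt p (σ.t l) u → SubAt p (σ.t r) w → ired R u w := by
    intro r'
    induction r' using Ordinal.induction with
    | _ r' IH =>
      set V : TRel Sg X := fun u w => ∃ (p : List ℕ) (l r : Ordinal.{0}),
        l ≤ r ∧ r ≤ r' ∧ r ≤ σ.len ∧
        (∀ β, l ≤ β → β < r → ¬ (σ.pos β <+: p ∧ σ.pos β ≠ p)) ∧
        SubAt p (σ.t l) u ∧ SubAt p (σ.t r) w with hV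
      have hVstep : ∀ u w, V u w → relComp
          (ReflTransGen (fun s t => RootStep R s t ∨ liftRel (ired R) s t))
          (liftRel V) u w := by
        rintro u w ⟨p, l, r, hlr, hrr', hrlen, hno, hsubl, hsubr⟩
        have key : ∀ (k : ℕ) (l' : Ordinal.{0}) (u' : Tm Sg X),
            l' ≤ r →
            (∀ β, l' ≤ β → β < r → ¬ (σ.pos β <+: p ∧ σ.pos β ≠ p)) →
            SubAt p (σ.t l') u' →
            {β : Ordinal.{0} | l' ≤ β ∧ β < r ∧ σ.pos β = p}.ncard = k →
            relComp (ReflTransGen (fun s t => RootStep R s t ∨ liftRel (ired R) s t))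
              (liftRel V) u' w := by
          intro k
          induction k using Nat.strong_induction_on with
          | _ k IHk =>
            intro l' u' hl'r hno' hsub' hcard
            by_cases hBne : {β : Ordinal.{0} | l' ≤ β ∧ β < r ∧ σ.pos β = p}.Nonempty
            case neg =>
              have hC1 : ∀ β, l' ≤ β → β < r → ¬ σ.pos β <+: p := by
                intro β h1 h2 hpre
                by_cases he : σ.pos β = p
                · exact hBne ⟨β, h1, h2, he⟩
                · exact hno' β h1 h2 ⟨hpre, he⟩
              rcases tm_cases u' with ⟨x, rfl⟩ | ⟨f, as, rfl⟩
              · have h5 := rseq_stableVar σ r hrlen l' hl'r hC1 hsub'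
                exact ⟨Tm.var x, ReflTransGen.refl, Or.inl (subAt_unique h5 hsubr)⟩
              · obtain ⟨bs, hbs⟩ := rseq_stableNode σ r hrlen l' hl'r hC1 hsub'
                have hwb : w = Tm.node f bs := subAt_unique hsubr hbs
                refine ⟨Tm.node f as, ReflTransGen.refl,
                  Or.inr ⟨f, as, bs, rfl, hwb, fun i => ?_⟩⟩
                refine ⟨p ++ [(i : ℕ)], l', r, hl'r, hrr', hrlen, ?_,
                  subAt_append hsub' i rfl, subAt_append hbs i rfl⟩
                intro β h1 h2 hcontra
                obtain ⟨hpre, hne2⟩ := hcontra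
                rcases List.prefix_concat_iff.mp hpre with he | hpre'
                · exact hne2 he
                · exact hC1 β h1 h2 hpre'
            case pos =>
              have hBfin := seq_finPos σ p l' r hrlen
              have hkpos : k ≠ 0 := by
                intro h
                rw [h] at hcard
                rw [(Set.ncard_eq_zero hBfin).mp hcard] at hBne
                exact Set.not_nonempty_empty hBne
              obtain ⟨hlm, hmr, hpm⟩ :=
                csInf_mem (s := {β : Ordinal.{0} | l' ≤ β ∧ β < r ∧ σ.pos β = p}) hBne
              set m := sInf {β : Ordinal.{0} | l' ≤ β ∧ β < r ∧ σ.pos β = p} with hm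
              have hC1seg : ∀ β, l' ≤ β → β < m → ¬ σ.pos β <+: p := by
                intro β h1 h2 hpre
                by_cases he : σ.pos β = p
                · have h3 : m ≤ β :=
                    csInf_le (OrderBot.bddBelow _) ⟨h1, h2.trans hmr, he⟩
                  exact absurd h2 (not_lt.2 h3)
                · exact hno' β h1 (h2.trans hmr) ⟨hpre, he⟩
              have hmlen : m < σ.len := lt_of_lt_of_le hmr hrlen
              have hmm1 : m < m + 1 := by
                rw [Ordinal.add_one_eq_succ]
                exact Order.lt_succ_of_not_isMax (not_isMax m)
              have hm1r : m + 1 ≤ r := by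
                rw [Ordinal.add_one_eq_succ]
                exact Order.succ_le_of_lt hmr
              have hno'' : ∀ β, m + 1 ≤ β → β < r →
                  ¬ (σ.pos β <+: p ∧ σ.pos β ≠ p) := fun β h1 h2 =>
                hno' β (hlm.trans ((le_of_lt hmm1).trans h1)) h2
              have hcard' : {β : Ordinal.{0} | m + 1 ≤ β ∧ β < r ∧ σ.pos β = p}.ncard
                  = k - 1 := by
                have hset : {β : Ordinal.{0} | m + 1 ≤ β ∧ β < r ∧ σ.pos β = p}
                    = {β : Ordinal.{0} | l' ≤ β ∧ β < r ∧ σ.pos β = p} \ {m} := by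
                  ext β
                  simp only [Set.mem_setOf_eq, Set.mem_diff, Set.mem_singleton_iff]
                  constructor
                  · rintro ⟨h1, h2, h3⟩
                    have hmβ : m < β := lt_of_lt_of_le hmm1 h1
                    exact ⟨⟨hlm.trans hmβ.le, h2, h3⟩, ne_of_gt hmβ⟩
                  · rintro ⟨⟨h1, h2, h3⟩, h4⟩
                    have h5 : m < β := lt_of_le_of_ne
                      (csInf_le (OrderBot.bddBelow _) ⟨h1, h2, h3⟩) (Ne.symm h4)
                    refine ⟨?_, h2, h3⟩
                    rw [Ordinal.add_one_eq_succ]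
                    exact Order.succ_le_of_lt h5
                have hmmem : m ∈ {β : Ordinal.{0} | l' ≤ β ∧ β < r ∧ σ.pos β = p} :=
                  ⟨hlm, hmr, hpm⟩
                rw [hset, Set.ncard_diff_singleton_of_mem hmmem, hcard]
              have hstepm := σ.step m hmlen
              have hppos : p ++ [] = σ.pos m := by rw [List.append_nil, hpm]
              rw [← hppos] at hstepm
              rcases tm_cases u' with ⟨x, rfl⟩ | ⟨f, as, rfl⟩
              · have hsubm : SubAt p (σ.t m) (Tm.var x) :=
                  rseq_stableVar σ m hmlen.le l' hlm hC1seg hsub'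
                obtain ⟨c2, hc2sub, hc2step⟩ := stepAt_subAt_prefix p hstepm hsubm
                have hroot : RootStep R (Tm.var x) c2 := stepAt_nil hc2step
                obtain ⟨z, hz1, hz2⟩ := IHk (k - 1) (by omega) (m + 1) c2 hm1r hno''
                  hc2sub hcard'
                exact ⟨z, ReflTransGen.head (Or.inl hroot) hz1, hz2⟩
              · obtain ⟨cs, hsubm⟩ := rseq_stableNode σ m hmlen.le l' hlm hC1seg hsub'
                have hmr' : m < r' := lt_of_lt_of_le hmr hrr'
                have hlift : liftRel (ired R) (Tm.node f as) (Tm.node f cs) := by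
                  refine Or.inr ⟨f, as, cs, rfl, rfl, fun i => ?_⟩
                  refine IH m hmr' (p ++ [(i : ℕ)]) l' m (as i) (cs i) hlm le_rfl
                    hmlen.le ?_ (subAt_append hsub' i rfl) (subAt_append hsubm i rfl)
                  intro β h1 h2 hcontra
                  obtain ⟨hpre, hne2⟩ := hcontra
                  rcases List.prefix_concat_iff.mp hpre with he | hpre'
                  · exact hne2 he
                  · exact hC1seg β h1 h2 hpre'
                obtain ⟨c2, hc2sub, hc2step⟩ := stepAt_subAt_prefix p hstepm hsubm
                have hroot : RootStep R (Tm.node f cs) c2 := stepAt_nil hc2step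
                obtain ⟨z, hz1, hz2⟩ := IHk (k - 1) (by omega) (m + 1) c2 hm1r hno''
                  hc2sub hcard'
                exact ⟨z, ReflTransGen.head (Or.inr hlift)
                  (ReflTransGen.head (Or.inl hroot) hz1), hz2⟩
        exact key _ l u hlr hno hsubl rfl
      intro p l r u w hlr hrr' hrlen hno hsubl hsubr
      exact ired_coind hVstep u w ⟨p, l, r, hlr, hrr', hrlen, hno, hsubl, hsubr⟩
  have h0sub : SubAt ([] : List ℕ) (σ.t 0) a := by rw [hσ0]; exact SubAt.nil a
  have hesub : SubAt ([] : List ℕ) (σ.t σ.len) b := by rw [hσe]; exact SubAt.nil b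
  refine main σ.len [] 0 σ.len a b (zero_le) le_rfl le_rfl ?_ h0sub hesub
  intro β h1 h2 hcontra
  exact hcontra.2 (List.prefix_nil.mp hcontra.1)

end Backward

/-- For every TRS `R` over a signature `Σ`, the fixed-point defined
infinitary rewrite relation `→∞ = μR.νS.((→ε ∪ ↓R)* ∘ ↓S)` coincides with the standard
ordinal-based relation `→∞_ord` of strongly convergent transfinite reduction. -/
theorem ired_eq_iredOrd (Sg : Signature) (X : Type) [Infinite X] (R : TRS Sg X) :
    ∀ s t : Tm Sg X, ired R s t ↔ iredOrd R s t := by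
  intro s t
  exact ⟨fun h => ired_le_iredOrd R s t h, fun h => iredOrd_le_ired R s t h⟩
end

section
/- For every TRS R over a signature Σ, the infinitary equational reasoning relation is a fixed point of the closure operator T∞: =∞ = T∞(=∞), where T∞(S) := νR.(S⁻¹ ∪ S ∪ ↓R)*. -/
open Relation

variable {Sg : Signature} {X : Type}

/-- The monotone operator `U ↦ (S⁻¹ ∪ S ∪ ↓U)*` (for a fixed relation `S`). -/
def TinfHom (S : TRel Sg X) : TRel Sg X →o TRel Sg X where
  toFun U := Relation.ReflTransGen (fun a b => S b a ∨ S a b ∨ liftRel U a b)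
  monotone' := by
    intro U V h a b hab
    refine ReflTransGen.mono ?_ _ _ hab
    intro x y hxy
    exact hxy.imp id (fun h' => h'.imp id (fun h'' => liftRel_mono h _ _ h''))

/-- The closure operator `T∞(S) := νR.(S⁻¹ ∪ S ∪ ↓R)*`. -/
def Tinf (S : TRel Sg X) : TRel Sg X := OrderHom.gfp (TinfHom S)

lemma ieq_unfold (R : TRS Sg X) :
    ieq R = Relation.ReflTransGen
      (fun s t => RootStep R t s ∨ RootStep R s t ∨ liftRel (ieq R) s t) :=
  (OrderHom.map_gfp (ieqHom R)).symm

lemma ieq_symm (R : TRS Sg X) {s t : Tm Sg X} (h : ieq R s t) : ieq R t s := by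
  set S : TRel Sg X := fun a b => ieq R b a with hS
  have hpost : S ≤ (ieqHom R) S := by
    intro a b hab
    have hab' : ieq R b a := hab
    rw [ieq_unfold R] at hab'
    show Relation.ReflTransGen
      (fun x y => RootStep R y x ∨ RootStep R x y ∨ liftRel S x y) a b
    clear hab
    induction hab' with
    | refl => exact Relation.ReflTransGen.refl
    | tail _ hstep ih =>
      refine Relation.ReflTransGen.head ?_ ih
      rcases hstep with h1 | h2 | h3
      · exact Or.inr (Or.inl h1)
      · exact Or.inl h2
      · rcases h3 with rfl | ⟨f, ss, ts, rfl, rfl, hi⟩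
        · exact Or.inr (Or.inr (Or.inl rfl))
        · exact Or.inr (Or.inr (Or.inr ⟨f, ts, ss, rfl, rfl, fun i => hi i⟩))
  exact OrderHom.le_gfp (ieqHom R) hpost t s h

lemma ieq_le_Tinf (R : TRS Sg X) : ieq R ≤ Tinf (ieq R) := by
  apply OrderHom.le_gfp
  intro a b hab
  exact Relation.ReflTransGen.single (Or.inr (Or.inl hab))

/-- For every TRS `R`, the infinitary equational reasoning relation
`=∞` is a fixed point of the closure operator `T∞`: `=∞ = T∞(=∞)`. -/
theorem ieq_fixed_point_Tinf (Sg : Signature) (X : Type) [Infinite X] (R : TRS Sg X) :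
    ieq R = Tinf (ieq R) := by
  apply le_antisymm (ieq_le_Tinf R)
  apply OrderHom.le_gfp
  intro a b hab
  show Relation.ReflTransGen
    (fun x y => RootStep R y x ∨ RootStep R x y ∨ liftRel (Tinf (ieq R)) x y) a b
  have key : ∀ x y, ieq R x y →
      Relation.ReflTransGen
        (fun x y => RootStep R y x ∨ RootStep R x y ∨ liftRel (Tinf (ieq R)) x y) x y := by
    intro x y hxy
    rw [ieq_unfold R] at hxy
    exact ReflTransGen.mono (fun u v huv =>
      huv.imp id (fun h' => h'.imp id (fun h'' => liftRel_mono (ieq_le_Tinf R) _ _ h''))) _ _ hxy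
  have hab' : Relation.ReflTransGen
      (fun x y => ieq R y x ∨ ieq R x y ∨ liftRel (Tinf (ieq R)) x y) a b := by
    have h := OrderHom.map_gfp (TinfHom (ieq R))
    exact Eq.mp (congrFun (congrFun h a) b).symm hab
  clear hab
  induction hab' with
  | refl => exact Relation.ReflTransGen.refl
  | tail _ hstep ih =>
    refine Relation.ReflTransGen.trans ih ?_
    rcases hstep with h1 | h2 | h3
    · exact key _ _ (ieq_symm R h1)
    · exact key _ _ h2
    · exact Relation.ReflTransGen.single (Or.inr (Or.inr h3))
end
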